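/- The polynomials Ê_γ(x;0,0), defined as the generating functions of semi-skyline augmented fillings of shape γ, form a Q-basis of the polynomial ring: the transition matrix from {Ê_γ(x;0,0) : γ a weak composition of n into m parts} to the monomial basis {x^μ}, ordered by reverse dominance, is upper triangular with 1's on the diagonal, hence the Ê_γ(x;0,0) are linearly independent and span the degree-n polynomials in m variables. -/

import Mathlib

/-- Indicator `I(x,y) = 1` if `x > y`, else `0`. -/
def ind (x y : ℕ) : ℤ := if y < x then 1 else 0

/-- A semi-skyline augmented filling (SSAF) of a weak composition.
Columns are indexed by positive integers (column 0 is unused and empty);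
`shape i` is the number of non-basement cells of column `i`; `entry i j`
is the entry in column `i`, row `j`, with row `0` the basement (entry `i`),
and `entry i j = 0` for cells outside the augmented diagram. -/
structure SSAF where
  shape : ℕ → ℕ
  entry : ℕ → ℕ → ℕ
  shape_zero : shape 0 = 0
  support : ∃ N, ∀ i, N ≤ i → shape i = 0
  basement : ∀ i, entry i 0 = i
  pos : ∀ i j, 1 ≤ j → j ≤ shape i → 1 ≤ entry i j
  zero_outside : ∀ i j, shape i < j → entry i j = 0
  noDescent : ∀ i j, j + 1 ≤ shape i → entry i (j + 1) ≤ entry i j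
  typeA : ∀ i1 i2 j, i1 < i2 → shape i2 ≤ shape i1 → 1 ≤ j → j ≤ shape i2 →
    ind (entry i1 j) (entry i2 j) + ind (entry i2 j) (entry i1 (j - 1))
      - ind (entry i1 j) (entry i1 (j - 1)) = 1
  typeB : ∀ i1 i2 j, i1 < i2 → shape i1 < shape i2 → j ≤ shape i1 → j + 1 ≤ shape i2 →
    ind (entry i2 (j + 1)) (entry i1 j) + ind (entry i1 j) (entry i2 j)
      - ind (entry i2 (j + 1)) (entry i2 j) = 1

/-- The number of (non-basement) cells of `F` carrying the entry `v`. -/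
noncomputable def SSAF.count (F : SSAF) (v : ℕ) : ℕ :=
  Set.ncard {c : ℕ × ℕ | 1 ≤ c.2 ∧ c.2 ≤ F.shape c.1 ∧ F.entry c.1 c.2 = v}

/-- The shape function on columns `1, …, m` determined by `γ : Fin m → ℕ`. -/
def shapeOf (m : ℕ) (γ : Fin m → ℕ) : ℕ → ℕ := fun i =>
  if h : 1 ≤ i ∧ i ≤ m then γ ⟨i - 1, by omega⟩ else 0

/-- `NK γ μ`: the number of semi-skyline augmented fillings of shape `γ` and
content `μ` (where `μ v` counts the entries equal to `v + 1`). -/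
noncomputable def NK (m : ℕ) (γ μ : Fin m → ℕ) : ℕ :=
  Set.ncard {F : SSAF | F.shape = shapeOf m γ ∧ ∀ v : Fin m, F.count ((v : ℕ) + 1) = μ v}

/-- `Ê_γ(x; 0, 0)`: the generating function of semi-skyline augmented fillings of
shape `γ`, as a polynomial in `m` variables (for `γ` a composition of `n`). -/
noncomputable def Ehat (m n : ℕ) (γ : Fin m → ℕ) : MvPolynomial (Fin m) ℚ :=
  ∑ μ ∈ Finset.Nat.antidiagonalTuple m n,
    (NK m γ μ : ℚ) • MvPolynomial.monomial (Finsupp.equivFunOnFinite.symm μ) 1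

/-- Reverse dominance order on weak compositions into `m` parts (parts indexed
`1, …, m` via `i ↦ (i : ℕ) + 1`). -/
def RevDom (m : ℕ) (μ γ : Fin m → ℕ) : Prop :=
  ∀ k : ℕ, ∑ i ∈ Finset.univ.filter (fun i : Fin m => k ≤ (i : ℕ) + 1), μ i ≤
    ∑ i ∈ Finset.univ.filter (fun i : Fin m => k ≤ (i : ℕ) + 1), γ i

lemma SSAF.entry_le (F : SSAF) : ∀ j i, j ≤ F.shape i → F.entry i j ≤ i := by
  intro j
  induction j with
  | zero => intro i _; exact le_of_eq (F.basement i)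
  | succ j ih =>
    intro i h
    exact le_trans (F.noDescent i j h) (ih i (by omega))

lemma SSAF.ext' {F G : SSAF} (h1 : F.shape = G.shape) (h2 : F.entry = G.entry) : F = G := by
  cases F; cases G; simp_all

lemma shapeOf_le (m : ℕ) (γ : Fin m → ℕ) (i : ℕ) :
    shapeOf m γ i ≤ Finset.univ.sup γ := by
  unfold shapeOf
  split
  · exact Finset.le_sup (Finset.mem_univ _)
  · exact Nat.zero_le _

lemma shapeOf_eq_zero (m : ℕ) (γ : Fin m → ℕ) (i : ℕ) (h : ¬ (1 ≤ i ∧ i ≤ m)) :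
    shapeOf m γ i = 0 := dif_neg h

lemma shapeOf_coe (m : ℕ) (γ : Fin m → ℕ) (v : Fin m) :
    shapeOf m γ ((v : ℕ) + 1) = γ v := by
  unfold shapeOf
  rw [dif_pos ⟨by omega, by omega⟩]
  rfl

/-- The finset of cells of an SSAF whose shape is `shapeOf m γ`. -/
def cellFS (m : ℕ) (γ : Fin m → ℕ) (F : SSAF) : Finset (ℕ × ℕ) :=
  (Finset.Icc 1 m ×ˢ Finset.Icc 1 (Finset.univ.sup γ)).filter (fun c => c.2 ≤ F.shape c.1)

lemma mem_cellFS {m : ℕ} {γ : Fin m → ℕ} {F : SSAF} (hsh : F.shape = shapeOf m γ)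
    (c : ℕ × ℕ) : c ∈ cellFS m γ F ↔ 1 ≤ c.2 ∧ c.2 ≤ F.shape c.1 := by
  unfold cellFS
  simp only [Finset.mem_filter, Finset.mem_product, Finset.mem_Icc]
  constructor
  · rintro ⟨⟨_, hb⟩, h2⟩; exact ⟨hb.1, h2⟩
  · rintro ⟨h1, h2⟩
    have hs : F.shape c.1 ≠ 0 := by omega
    have hc1 : 1 ≤ c.1 ∧ c.1 ≤ m := by
      by_contra h
      exact hs (by rw [hsh]; exact shapeOf_eq_zero m γ c.1 h)
    have hB : F.shape c.1 ≤ Finset.univ.sup γ := by rw [hsh]; exact shapeOf_le m γ c.1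
    exact ⟨⟨hc1, h1, by omega⟩, h2⟩

lemma count_eq_card {m : ℕ} {γ : Fin m → ℕ} {F : SSAF} (hsh : F.shape = shapeOf m γ)
    (v : ℕ) : F.count v = ((cellFS m γ F).filter (fun c => F.entry c.1 c.2 = v)).card := by
  unfold SSAF.count
  rw [← Set.ncard_coe_finset]
  congr 1
  ext c
  simp only [Set.mem_setOf_eq, Finset.coe_filter, Finset.mem_coe,
    mem_cellFS hsh]
  tauto

lemma column_card {m : ℕ} {γ : Fin m → ℕ} {F : SSAF} (hsh : F.shape = shapeOf m γ)
    (i : ℕ) (hi : 1 ≤ i) (him : i ≤ m) :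
    ((cellFS m γ F).filter (fun c => c.1 = i)).card = F.shape i := by
  have : (cellFS m γ F).filter (fun c => c.1 = i) = {i} ×ˢ Finset.Icc 1 (F.shape i) := by
    ext c
    simp only [Finset.mem_filter, mem_cellFS hsh, Finset.mem_product, Finset.mem_singleton,
      Finset.mem_Icc]
    constructor
    · rintro ⟨⟨h1, h2⟩, h3⟩; exact ⟨h3, h1, h3 ▸ h2⟩
    · rintro ⟨h3, h1, h2⟩; exact ⟨⟨h1, h3 ▸ h2⟩, h3⟩
  rw [this, Finset.card_product, Finset.card_singleton, Nat.card_Icc]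
  omega

lemma NK_revdom (m : ℕ) (γ μ : Fin m → ℕ) (h : NK m γ μ ≠ 0) : RevDom m μ γ := by
  have hne : {F : SSAF | F.shape = shapeOf m γ ∧
      ∀ v : Fin m, F.count ((v : ℕ) + 1) = μ v}.Nonempty := by
    by_contra hc
    rw [Set.not_nonempty_iff_eq_empty] at hc
    exact h (by unfold NK; rw [hc, Set.ncard_empty])
  obtain ⟨F, hsh, hct⟩ := hne
  intro k
  set T : Finset (Fin m) := Finset.univ.filter (fun i : Fin m => k ≤ (i : ℕ) + 1) with hT
  -- LHS: sum of counts = card of a biUnion of disjoint fibers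
  have hL : ∑ i ∈ T, μ i =
      (T.biUnion (fun i => (cellFS m γ F).filter
        (fun c => F.entry c.1 c.2 = (i : ℕ) + 1))).card := by
    rw [Finset.card_biUnion]
    · refine Finset.sum_congr rfl (fun i _ => ?_)
      rw [← hct i, count_eq_card hsh]
    · intro a _ b _ hab
      rw [Function.onFun, Finset.disjoint_left]
      intro c hca hcb
      simp only [Finset.mem_filter] at hca hcb
      exact hab (by ext; omega)
  -- the biUnion is contained in the cells in columns ≥ k
  have hsub : T.biUnion (fun i => (cellFS m γ F).filter
        (fun c => F.entry c.1 c.2 = (i : ℕ) + 1)) ⊆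
      (cellFS m γ F).filter (fun c => k ≤ c.1) := by
    intro c hc
    simp only [Finset.mem_biUnion, Finset.mem_filter] at hc ⊢
    obtain ⟨i, hiT, hcell, hent⟩ := hc
    refine ⟨hcell, ?_⟩
    have h1 := F.entry_le c.2 c.1 ((mem_cellFS hsh c).1 hcell).2
    have h2 : k ≤ (i : ℕ) + 1 := by
      rw [hT] at hiT; simpa using hiT
    omega
  -- RHS : cells in columns ≥ k, counted columnwise
  have hR : ((cellFS m γ F).filter (fun c => k ≤ c.1)).card = ∑ i ∈ T, γ i := by
    rw [Finset.card_eq_sum_card_fiberwise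
      (f := fun c => c.1) (t := (Finset.Icc 1 m).filter (fun i => k ≤ i))]
    · have step : ∀ i ∈ (Finset.Icc 1 m).filter (fun i => k ≤ i),
          (((cellFS m γ F).filter (fun c => k ≤ c.1)).filter (fun c => c.1 = i)).card
            = F.shape i := by
        intro i hi
        simp only [Finset.mem_filter, Finset.mem_Icc] at hi
        rw [← column_card hsh i hi.1.1 hi.1.2]
        congr 1
        rw [Finset.filter_filter]
        apply Finset.filter_congr
        intro c _
        constructor
        · tauto
        · intro hh; exact ⟨hh ▸ hi.2, hh⟩
      rw [Finset.sum_congr rfl step]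
      -- reindex: columns i=v+1 ↔ Fin m indices v
      refine Finset.sum_bij (fun (v : Fin m) (_ : v ∈ T) => (v : ℕ) + 1) ?_ ?_ ?_ ?_ |>.symm
      · intro v hv
        simp only [hT, Finset.mem_filter, Finset.mem_univ, true_and] at hv
        simp only [Finset.mem_filter, Finset.mem_Icc]
        exact ⟨⟨by omega, by omega⟩, hv⟩
      · intro a _ b _ hab
        have hab' : (a : ℕ) + 1 = (b : ℕ) + 1 := hab
        ext; omega
      · intro b hb
        simp only [Finset.mem_filter, Finset.mem_Icc] at hb
        refine ⟨⟨b - 1, by omega⟩, ?_, ?_⟩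
        · simp only [hT, Finset.mem_filter, Finset.mem_univ, true_and]
          show k ≤ b - 1 + 1
          omega
        · show b - 1 + 1 = b
          omega
      · intro v hv
        rw [hsh, shapeOf_coe]
    · intro c (hc : c ∈ (cellFS m γ F).filter (fun c => k ≤ c.1))
      show c.1 ∈ (Finset.Icc 1 m).filter (fun i => k ≤ i)
      simp only [Finset.mem_filter] at hc ⊢
      have := (mem_cellFS hsh c).1 hc.1
      have hs : F.shape c.1 ≠ 0 := by omega
      have hc1 : 1 ≤ c.1 ∧ c.1 ≤ m := by
        by_contra hcon
        exact hs (by rw [hsh]; exact shapeOf_eq_zero m γ c.1 hcon)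
      exact ⟨Finset.mem_Icc.2 hc1, hc.2⟩
  rw [hL, ← hR]
  exact Finset.card_le_card hsub

/-- The canonical SSAF of shape `γ`: every cell of column `i` carries entry `i`. -/
def canonical (m : ℕ) (γ : Fin m → ℕ) : SSAF where
  shape := shapeOf m γ
  entry := fun i j => if j ≤ shapeOf m γ i then i else 0
  shape_zero := shapeOf_eq_zero m γ 0 (by omega)
  support := ⟨m + 1, fun i hi => shapeOf_eq_zero m γ i (by omega)⟩
  basement := fun i => if_pos (Nat.zero_le _)
  pos := by
    intro i j h1 h2
    rw [if_pos h2]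
    by_contra hi
    have hi0 : i = 0 := by omega
    rw [hi0, shapeOf_eq_zero m γ 0 (by omega)] at h2
    omega
  zero_outside := fun i j h => if_neg (by omega)
  noDescent := by
    intro i j h
    rw [if_pos h, if_pos (by omega)]
  typeA := by
    intro i1 i2 j h12 hsh h1 h2
    rw [if_pos (le_trans h2 hsh), if_pos h2, if_pos (le_trans (by omega) hsh)]
    simp only [ind]
    split_ifs <;> omega
  typeB := by
    intro i1 i2 j h12 hsh h1 h2
    rw [if_pos h2, if_pos (le_trans h1 (le_of_lt hsh)), if_pos h1]
    simp only [ind]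
    split_ifs <;> omega

lemma canonical_count (m : ℕ) (γ : Fin m → ℕ) (v : ℕ) (hv : 1 ≤ v) :
    (canonical m γ).count v = shapeOf m γ v := by
  unfold SSAF.count
  have hset : {c : ℕ × ℕ | 1 ≤ c.2 ∧ c.2 ≤ (canonical m γ).shape c.1 ∧
      (canonical m γ).entry c.1 c.2 = v} =
      ↑(({v} : Finset ℕ) ×ˢ Finset.Icc 1 (shapeOf m γ v)) := by
    ext c
    simp only [Set.mem_setOf_eq, Finset.coe_product, Set.mem_prod, Finset.coe_singleton,
      Set.mem_singleton_iff, Finset.coe_Icc, Set.mem_Icc]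
    show _ ↔ c.1 = v ∧ 1 ≤ c.2 ∧ c.2 ≤ shapeOf m γ v
    constructor
    · rintro ⟨h1, h2, h3⟩
      rw [show (canonical m γ).entry c.1 c.2 = c.1 from if_pos h2] at h3
      exact ⟨h3, h1, h3 ▸ h2⟩
    · rintro ⟨h1, h2, h3⟩
      refine ⟨h2, h1 ▸ h3, ?_⟩
      rw [show (canonical m γ).entry c.1 c.2 = c.1 from if_pos (by show c.2 ≤ _; rw [h1]; exact h3)]
      exact h1
  rw [hset, Set.ncard_coe_finset, Finset.card_product, Finset.card_singleton, Nat.card_Icc]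
  omega

lemma eq_canonical {m : ℕ} {γ : Fin m → ℕ} (F : SSAF) (hsh : F.shape = shapeOf m γ)
    (hct : ∀ v : Fin m, F.count ((v : ℕ) + 1) = γ v) : F = canonical m γ := by
  -- main claim, by descending induction on the column index
  have main : ∀ d i, m + 1 ≤ i + d → ∀ j, 1 ≤ j → j ≤ F.shape i → F.entry i j = i := by
    intro d
    induction d with
    | zero =>
      intro i hi j h1 h2
      have : F.shape i = 0 := by rw [hsh]; exact shapeOf_eq_zero m γ i (by omega)
      omega
    | succ d ih =>
      intro i hi j h1 h2
      -- column bounds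
      have hs : F.shape i ≠ 0 := by omega
      have hc1 : 1 ≤ i ∧ i ≤ m := by
        by_contra hcon
        exact hs (by rw [hsh]; exact shapeOf_eq_zero m γ i hcon)
      -- count of entry i equals shape i
      have hcnt : F.count i = F.shape i := by
        have := hct ⟨i - 1, by omega⟩
        simp only at this
        rw [show i - 1 + 1 = i by omega] at this
        rw [this, hsh]
        rw [show γ ⟨i-1, by omega⟩ = shapeOf m γ (i - 1 + 1) from (shapeOf_coe m γ _).symm]
        rw [show i - 1 + 1 = i by omega]
      -- the set of cells with entry i is contained in column i
      set S := {c : ℕ × ℕ | 1 ≤ c.2 ∧ c.2 ≤ F.shape c.1 ∧ F.entry c.1 c.2 = i} with hS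
      set Tc := {c : ℕ × ℕ | c.1 = i ∧ 1 ≤ c.2 ∧ c.2 ≤ F.shape i} with hTc
      have hTfin : Tc.Finite := by
        apply Set.Finite.subset (Set.finite_Icc ((i, 1) : ℕ × ℕ) (i, F.shape i))
        rintro ⟨a, b⟩ ⟨ha, hb1, hb2⟩
        simp only [Set.mem_Icc, Prod.mk_le_mk]
        exact ⟨⟨le_of_eq ha.symm, hb1⟩, le_of_eq ha, hb2⟩
      have hTcard : Tc.ncard = F.shape i := by
        have : Tc = ↑(({i} : Finset ℕ) ×ˢ Finset.Icc 1 (F.shape i)) := by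
          ext c
          simp only [hTc, Set.mem_setOf_eq, Finset.coe_product, Set.mem_prod,
            Finset.coe_singleton, Set.mem_singleton_iff, Finset.coe_Icc, Set.mem_Icc]
          try tauto
        rw [this, Set.ncard_coe_finset, Finset.card_product, Finset.card_singleton, Nat.card_Icc]
        omega
      have hsub : S ⊆ Tc := by
        rintro ⟨a, b⟩ ⟨hb1, hb2, hent⟩
        dsimp only at hb1 hb2 hent
        have hle : F.entry a b ≤ a := F.entry_le b a hb2
        have hai : a = i := by
          rcases Nat.lt_or_ge i a with hlt | hge
          · exfalso
            have := ih a (by omega) b hb1 hb2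
            omega
          · omega
        exact ⟨hai, hb1, by rw [← hai]; exact hb2⟩
      have hSeq : S = Tc := by
        apply Set.eq_of_subset_of_ncard_le hsub _ hTfin
        have : S.ncard = F.count i := rfl
        omega
      have : (i, j) ∈ S := by rw [hSeq]; exact ⟨rfl, h1, h2⟩
      exact this.2.2
  have C : ∀ i j, 1 ≤ j → j ≤ F.shape i → F.entry i j = i :=
    fun i => main (m + 1) i (by omega)
  apply SSAF.ext'
  · exact hsh
  · funext i j
    show F.entry i j = if j ≤ shapeOf m γ i then i else 0
    rcases Nat.eq_zero_or_pos j with hj | hj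
    · subst hj
      rw [if_pos (Nat.zero_le _)]
      exact F.basement i
    · by_cases hle : j ≤ F.shape i
      · rw [if_pos (hsh ▸ hle)]
        exact C i j hj hle
      · rw [if_neg (by rw [← hsh]; omega)]
        exact F.zero_outside i j (by omega)

lemma NK_diag (m : ℕ) (γ : Fin m → ℕ) : NK m γ γ = 1 := by
  unfold NK
  have : {F : SSAF | F.shape = shapeOf m γ ∧ ∀ v : Fin m, F.count ((v : ℕ) + 1) = γ v}
      = {canonical m γ} := by
    ext F
    simp only [Set.mem_setOf_eq, Set.mem_singleton_iff]
    constructor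
    · rintro ⟨h1, h2⟩; exact eq_canonical F h1 h2
    · rintro rfl
      refine ⟨rfl, fun v => ?_⟩
      rw [canonical_count m γ _ (by omega), shapeOf_coe]
  rw [this, Set.ncard_singleton]

lemma revDom_refl (m : ℕ) (γ : Fin m → ℕ) : RevDom m γ γ := fun _ => le_refl _

lemma revDom_trans {m : ℕ} {α β γ : Fin m → ℕ} (h1 : RevDom m α β) (h2 : RevDom m β γ) :
    RevDom m α γ := fun k => le_trans (h1 k) (h2 k)

lemma tail_sum_succ {m : ℕ} (f : Fin m → ℕ) (i : Fin m) :
    ∑ j ∈ Finset.univ.filter (fun j : Fin m => (i : ℕ) + 1 ≤ (j : ℕ) + 1), f j =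
      f i + ∑ j ∈ Finset.univ.filter (fun j : Fin m => (i : ℕ) + 2 ≤ (j : ℕ) + 1), f j := by
  have hset : Finset.univ.filter (fun j : Fin m => (i : ℕ) + 1 ≤ (j : ℕ) + 1) =
      insert i (Finset.univ.filter (fun j : Fin m => (i : ℕ) + 2 ≤ (j : ℕ) + 1)) := by
    ext j
    simp only [Finset.mem_filter, Finset.mem_univ, true_and, Finset.mem_insert, Fin.ext_iff]
    omega
  rw [hset, Finset.sum_insert (by simp)]

lemma revDom_antisymm {m : ℕ} {μ γ : Fin m → ℕ} (h1 : RevDom m μ γ) (h2 : RevDom m γ μ) :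
    μ = γ := by
  have heq : ∀ k, ∑ i ∈ Finset.univ.filter (fun i : Fin m => k ≤ (i : ℕ) + 1), μ i =
      ∑ i ∈ Finset.univ.filter (fun i : Fin m => k ≤ (i : ℕ) + 1), γ i :=
    fun k => le_antisymm (h1 k) (h2 k)
  funext i
  have e1 := tail_sum_succ μ i
  have e2 := tail_sum_succ γ i
  have e3 := heq ((i : ℕ) + 1)
  have e4 := heq ((i : ℕ) + 2)
  omega

open scoped Classical

/-- rank of `μ` within a finset: the number of elements RevDom-below `μ`. -/
noncomputable def rk (m : ℕ) (s : Finset (Fin m → ℕ)) (μ : Fin m → ℕ) : ℕ :=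
  (s.filter (fun ν => RevDom m ν μ)).card

lemma rk_lt {m : ℕ} {s : Finset (Fin m → ℕ)} {μ γ : Fin m → ℕ} (hγ : γ ∈ s)
    (hle : RevDom m μ γ) (hne : μ ≠ γ) : rk m s μ < rk m s γ := by
  unfold rk
  apply Finset.card_lt_card
  constructor
  · intro ν hν
    simp only [Finset.mem_filter] at hν ⊢
    exact ⟨hν.1, revDom_trans hν.2 hle⟩
  · intro hcon
    have hγmem : γ ∈ s.filter (fun ν => RevDom m ν γ) :=
      Finset.mem_filter.2 ⟨hγ, revDom_refl m γ⟩
    have := hcon hγmem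
    simp only [Finset.mem_filter] at this
    exact hne (revDom_antisymm hle this.2)

lemma coeff_Ehat (m n : ℕ) (γ μ : Fin m → ℕ) (hμ : μ ∈ Finset.Nat.antidiagonalTuple m n) :
    MvPolynomial.coeff (Finsupp.equivFunOnFinite.symm μ) (Ehat m n γ) = (NK m γ μ : ℚ) := by
  unfold Ehat
  rw [MvPolynomial.coeff_sum]
  rw [Finset.sum_eq_single μ]
  · rw [MvPolynomial.coeff_smul, MvPolynomial.coeff_monomial, if_pos rfl, smul_eq_mul, mul_one]
  · intro ν _ hne
    rw [MvPolynomial.coeff_smul, MvPolynomial.coeff_monomial,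
      if_neg (fun hc => hne (Finsupp.equivFunOnFinite.symm.injective hc)), smul_zero]
  · intro hc
    exact absurd hμ hc

lemma Ehat_li (m n : ℕ) :
    LinearIndependent ℚ
      (fun γ : Finset.Nat.antidiagonalTuple m n => Ehat m n (γ : Fin m → ℕ)) := by
  set s := Finset.Nat.antidiagonalTuple m n with hs
  rw [Fintype.linearIndependent_iff]
  intro g hg
  by_contra hne
  push_neg at hne
  obtain ⟨γ0, hγ0⟩ := hne
  set T : Finset ↥s := Finset.univ.filter (fun γ => g γ ≠ 0) with hT
  have hTne : T.Nonempty := ⟨γ0, by simp [hT, hγ0]⟩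
  obtain ⟨μ, hμT, hmax⟩ := Finset.exists_max_image T (fun γ => rk m s (γ : Fin m → ℕ)) hTne
  have hμs : (μ : Fin m → ℕ) ∈ s := μ.2
  have hgμ : g μ ≠ 0 := by
    have := Finset.mem_filter.1 hμT
    exact this.2
  have hco := congrArg
    (MvPolynomial.coeff (Finsupp.equivFunOnFinite.symm (μ : Fin m → ℕ))) hg
  rw [MvPolynomial.coeff_sum, MvPolynomial.coeff_zero] at hco
  have hterm : ∀ γ : ↥s,
      MvPolynomial.coeff (Finsupp.equivFunOnFinite.symm (μ : Fin m → ℕ))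
        (g γ • Ehat m n (γ : Fin m → ℕ)) =
      g γ * (NK m (γ : Fin m → ℕ) (μ : Fin m → ℕ) : ℚ) := by
    intro γ
    rw [MvPolynomial.coeff_smul, coeff_Ehat m n _ _ hμs, smul_eq_mul]
  rw [Finset.sum_congr rfl (fun γ _ => hterm γ)] at hco
  rw [Finset.sum_eq_single μ] at hco
  · rw [NK_diag, Nat.cast_one, mul_one] at hco
    exact hgμ hco
  · intro γ _ hγμ
    by_cases hgγ : g γ = 0
    · rw [hgγ, zero_mul]
    · by_cases h0 : NK m (γ : Fin m → ℕ) (μ : Fin m → ℕ) = 0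
      · rw [h0, Nat.cast_zero, mul_zero]
      · exfalso
        have hle := NK_revdom m _ _ h0
        have hcne : (μ : Fin m → ℕ) ≠ (γ : Fin m → ℕ) :=
          fun hc => hγμ (Subtype.ext hc.symm)
        have hlt := rk_lt γ.2 hle hcne
        have hγT : γ ∈ T := Finset.mem_filter.2 ⟨Finset.mem_univ _, hgγ⟩
        have := hmax γ hγT
        omega
  · intro hc
    exact absurd (Finset.mem_univ μ) hc

lemma mono_mem (m n : ℕ) :
    ∀ (r : ℕ) (μ : Fin m → ℕ), μ ∈ Finset.Nat.antidiagonalTuple m n →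
      rk m (Finset.Nat.antidiagonalTuple m n) μ ≤ r →
      (MvPolynomial.monomial (Finsupp.equivFunOnFinite.symm μ) (1 : ℚ)) ∈
        Submodule.span ℚ (Set.range
          (fun γ : Finset.Nat.antidiagonalTuple m n => Ehat m n (γ : Fin m → ℕ))) := by
  intro r
  induction r with
  | zero =>
    intro μ hμ hr
    exfalso
    have hmem : μ ∈ (Finset.Nat.antidiagonalTuple m n).filter (fun ν => RevDom m ν μ) :=
      Finset.mem_filter.2 ⟨hμ, revDom_refl m μ⟩
    have hpos : 0 < rk m (Finset.Nat.antidiagonalTuple m n) μ :=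
      Finset.card_pos.2 ⟨μ, hmem⟩
    omega
  | succ r ih =>
    intro μ hμ hr
    have hE : (NK m μ μ : ℚ) • MvPolynomial.monomial (Finsupp.equivFunOnFinite.symm μ) (1 : ℚ)
        + ∑ ν ∈ (Finset.Nat.antidiagonalTuple m n).erase μ,
            (NK m μ ν : ℚ) • MvPolynomial.monomial (Finsupp.equivFunOnFinite.symm ν) (1 : ℚ)
        = Ehat m n μ :=
      Finset.add_sum_erase _ _ hμ
    rw [NK_diag, Nat.cast_one, one_smul] at hE
    have hmono : MvPolynomial.monomial (Finsupp.equivFunOnFinite.symm μ) (1 : ℚ)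
        = Ehat m n μ - ∑ ν ∈ (Finset.Nat.antidiagonalTuple m n).erase μ,
            (NK m μ ν : ℚ) • MvPolynomial.monomial (Finsupp.equivFunOnFinite.symm ν) (1 : ℚ) :=
      eq_sub_of_add_eq hE
    rw [hmono]
    apply Submodule.sub_mem
    · exact Submodule.subset_span ⟨⟨μ, hμ⟩, rfl⟩
    · apply Submodule.sum_mem
      intro ν hν
      by_cases h0 : NK m μ ν = 0
      · rw [h0, Nat.cast_zero, zero_smul]
        exact Submodule.zero_mem _
      · apply Submodule.smul_mem
        have hνs := Finset.mem_of_mem_erase hν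
        have hne : ν ≠ μ := Finset.ne_of_mem_erase hν
        have hlt := rk_lt hμ (NK_revdom m μ ν h0) hne
        exact ih ν hνs (by omega)

/-- The transition matrix from the polynomials `Ê_γ(x;0,0)`, for `γ` a
weak composition of `n` into `m` parts, to the monomial basis is upper triangular with
respect to reverse dominance order with `1`'s on the diagonal (`NK γ μ ≠ 0 → μ ≤ γ`
and `NK γ γ = 1`); hence the `Ê_γ(x;0,0)` are linearly independent and span the same
subspace as the monomials of degree `n` in `m` variables. -/
theorem Ehat_basis (m n : ℕ) :
    (∀ γ μ : Fin m → ℕ, NK m γ μ ≠ 0 → RevDom m μ γ) ∧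
    (∀ γ : Fin m → ℕ, NK m γ γ = 1) ∧
    LinearIndependent ℚ
      (fun γ : Finset.Nat.antidiagonalTuple m n => Ehat m n (γ : Fin m → ℕ)) ∧
    Submodule.span ℚ
        (Set.range (fun γ : Finset.Nat.antidiagonalTuple m n => Ehat m n (γ : Fin m → ℕ))) =
      Submodule.span ℚ
        ((fun μ : Fin m → ℕ =>
            (MvPolynomial.monomial (Finsupp.equivFunOnFinite.symm μ) (1 : ℚ))) ''
          (Finset.Nat.antidiagonalTuple m n : Set (Fin m → ℕ))) := by
  refine ⟨NK_revdom m, NK_diag m, Ehat_li m n, le_antisymm ?_ ?_⟩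
  · rw [Submodule.span_le]
    rintro _ ⟨γ, rfl⟩
    show Ehat m n (γ : Fin m → ℕ) ∈ _
    unfold Ehat
    apply Submodule.sum_mem
    intro μ hμ
    apply Submodule.smul_mem
    exact Submodule.subset_span (Set.mem_image_of_mem _ (Finset.mem_coe.2 hμ))
  · rw [Submodule.span_le]
    rintro _ ⟨μ, hμ, rfl⟩
    exact mono_mem m n (rk m (Finset.Nat.antidiagonalTuple m n) μ) μ
      (Finset.mem_coe.1 hμ) (le_refl _)
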